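/- Let H₃ be a connected simple graph containing a vertex v with d(v) ≥ 3 that has two pendant paths each of length at least 2: a pendant path v v₂ u₂₁ … u₂t₂ and a pendant path v vℓ … uℓ₁ uℓtℓ (so v₂ has exactly the two neighbors v and u₂₁, all internal vertices of the paths have degree 2, and u₂t₂ and uℓtℓ are pendant vertices). Let w₁w₂ be an edge lying on a cycle of H₃, and let H₄ = H₃ − {vv₂, u₂₁v₂, w₁w₂} + {v₂w₁, v₂w₂, u₂₁uℓtℓ}. Then M₁(H₄) < M₁(H₃). -/

import Mathlib

set_option maxHeartbeats 1000000
open scoped Classical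


lemma aux_getVert_mem_support {V : Type*} {G : SimpleGraph V} {a b : V}
    (p : G.Walk a b) (n : ℕ) : p.getVert n ∈ p.support := by
  rcases le_or_gt n p.length with h | h
  · exact SimpleGraph.Walk.mem_support_iff_exists_getVert.mpr ⟨n, rfl, h⟩
  · rw [p.getVert_of_length_le h.le]; exact p.end_mem_support

lemma aux_getVert_inj {V : Type*} {G : SimpleGraph V} {a b : V}
    {p : G.Walk a b} (hp : p.IsPath) {i j : ℕ} (hi : i ≤ p.length) (hj : j ≤ p.length)
    (h : p.getVert i = p.getVert j) : i = j := by
  induction p generalizing i j with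
  | nil => simp at hi hj; omega
  | cons hadj p ih =>
    rw [SimpleGraph.Walk.cons_isPath_iff] at hp
    match i, j with
    | 0, 0 => rfl
    | 0, j+1 =>
      exfalso
      simp only [SimpleGraph.Walk.getVert_zero, SimpleGraph.Walk.getVert_cons_succ] at h
      exact hp.2 (h ▸ aux_getVert_mem_support p j)
    | i+1, 0 =>
      exfalso
      simp only [SimpleGraph.Walk.getVert_zero, SimpleGraph.Walk.getVert_cons_succ] at h
      exact hp.2 (h ▸ aux_getVert_mem_support p i)
    | i+1, j+1 =>
      simp only [SimpleGraph.Walk.getVert_cons_succ] at h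
      simp only [SimpleGraph.Walk.length_cons] at hi hj
      have := ih hp.1 (by omega) (by omega) h
      omega


/-- The first Zagreb index: the sum of the squares of the vertex degrees. -/
noncomputable def zagrebM1 {V : Type*} [Fintype V] (G : SimpleGraph V) : ℕ :=
  ∑ v : V, G.degree v ^ 2

lemma zagreb_helper {V : Type*} [Fintype V] (H₃ H₄ : SimpleGraph V)
    (v v₂ u z w₁ w₂ y₀ : V)
    (hadj : ∀ a b : V, H₄.Adj a b ↔
      ((H₃.Adj a b ∧ ¬(s(a,b) = s(v, v₂) ∨ s(a,b) = s(u, v₂) ∨ s(a,b) = s(w₁, w₂)))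
        ∨ ((s(a,b) = s(v₂, w₁) ∨ s(a,b) = s(v₂, w₂) ∨ s(a,b) = s(u, z)) ∧ a ≠ b)))
    (hv2v : v₂ ≠ v) (hv2u : v₂ ≠ u) (huv : u ≠ v) (hzv : z ≠ v) (hw12 : w₁ ≠ w₂)
    (hw1v : w₁ ≠ v) (hw1v2 : w₁ ≠ v₂) (hw1u : w₁ ≠ u)
    (hw2v : w₂ ≠ v) (hw2v2 : w₂ ≠ v₂) (hw2u : w₂ ≠ u)
    (hzw1 : z ≠ w₁) (hzw2 : z ≠ w₂) (hzv2 : z ≠ v₂) (hzu : z ≠ u)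
    (hy0u : y₀ ≠ u)
    (hv2adj : ∀ b, H₃.Adj v₂ b ↔ b = v ∨ b = u)
    (hzadj : ∀ b, H₃.Adj z b ↔ b = y₀)
    (hwadj : H₃.Adj w₁ w₂)
    (hdeg3 : 3 ≤ H₃.degree v) :
    zagrebM1 H₄ < zagrebM1 H₃ := by
  classical
  -- symmetric disequalities
  have e1 : v ≠ v₂ := hv2v.symm
  have e2 : u ≠ v₂ := hv2u.symm
  have e3 : v ≠ u := huv.symm
  have e4 : v ≠ z := hzv.symm
  have e5 : w₂ ≠ w₁ := hw12.symm
  have e6 : v ≠ w₁ := hw1v.symm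
  have e7 : v₂ ≠ w₁ := hw1v2.symm
  have e8 : u ≠ w₁ := hw1u.symm
  have e9 : v ≠ w₂ := hw2v.symm
  have e10 : v₂ ≠ w₂ := hw2v2.symm
  have e11 : u ≠ w₂ := hw2u.symm
  have e12 : w₁ ≠ z := hzw1.symm
  have e13 : w₂ ≠ z := hzw2.symm
  have e14 : v₂ ≠ z := hzv2.symm
  have e15 : u ≠ z := hzu.symm
  have adj1 : H₃.Adj v v₂ := ((hv2adj v).mpr (Or.inl rfl)).symm
  have adj2 : H₃.Adj v₂ u := (hv2adj u).mpr (Or.inr rfl)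
  -- propositional form
  have hadj' : ∀ a b : V, H₄.Adj a b ↔
      ((H₃.Adj a b ∧ ¬((a = v ∧ b = v₂) ∨ (a = v₂ ∧ b = v) ∨ (a = u ∧ b = v₂)
          ∨ (a = v₂ ∧ b = u) ∨ (a = w₁ ∧ b = w₂) ∨ (a = w₂ ∧ b = w₁)))
        ∨ (((a = v₂ ∧ b = w₁) ∨ (a = w₁ ∧ b = v₂) ∨ (a = v₂ ∧ b = w₂)
          ∨ (a = w₂ ∧ b = v₂) ∨ (a = u ∧ b = z) ∨ (a = z ∧ b = u)) ∧ a ≠ b)) := by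
    intro a b
    rw [hadj]
    simp only [Sym2.eq_iff, or_assoc]
  -- per-vertex adjacency in H₄
  have keyv : ∀ b, H₄.Adj v b ↔ (H₃.Adj v b ∧ b ≠ v₂) := by
    intro b; rw [hadj']; tauto
  have keyv2 : ∀ b, H₄.Adj v₂ b ↔ (b = w₁ ∨ b = w₂) := by
    intro b; rw [hadj']
    have h1 := hv2adj b
    constructor
    · rintro (⟨hab, hn⟩ | ⟨h, hne⟩)
      · exfalso
        rcases h1.mp hab with hb | hb
        · exact hn (Or.inr (Or.inl ⟨rfl, hb⟩))
        · exact hn (Or.inr (Or.inr (Or.inr (Or.inl ⟨rfl, hb⟩))))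
      · rcases h with ⟨_, hb⟩ | ⟨h', _⟩ | ⟨_, hb⟩ | ⟨h', _⟩ | ⟨h', _⟩ | ⟨h', _⟩
        · exact Or.inl hb
        · exact absurd h' hw1v2.symm
        · exact Or.inr hb
        · exact absurd h' hw2v2.symm
        · exact absurd h' hv2u
        · exact absurd h' hzv2.symm
    · rintro (rfl | rfl)
      · exact Or.inr ⟨Or.inl ⟨rfl, rfl⟩, e7⟩
      · exact Or.inr ⟨Or.inr (Or.inr (Or.inl ⟨rfl, rfl⟩)), e10⟩
  have keyu : ∀ b, H₄.Adj u b ↔ ((H₃.Adj u b ∧ b ≠ v₂) ∨ b = z) := by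
    intro b; rw [hadj']
    constructor
    · rintro (⟨hab, hn⟩ | ⟨h, hne⟩)
      · exact Or.inl ⟨hab, fun hb => hn (Or.inr (Or.inr (Or.inl ⟨rfl, hb⟩)))⟩
      · rcases h with ⟨h', _⟩ | ⟨h', _⟩ | ⟨h', _⟩ | ⟨h', _⟩ | ⟨_, hb⟩ | ⟨h', _⟩
        · exact absurd h' e2
        · exact absurd h' e8
        · exact absurd h' e2
        · exact absurd h' e11
        · exact Or.inr hb
        · exact absurd h' e15
    · rintro (⟨hab, hb⟩ | rfl)
      · refine Or.inl ⟨hab, ?_⟩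
        rintro (⟨h', _⟩ | ⟨h', _⟩ | ⟨_, h2⟩ | ⟨h', _⟩ | ⟨h', _⟩ | ⟨h', _⟩)
        · exact huv h'
        · exact e2 h'
        · exact hb h2
        · exact e2 h'
        · exact e8 h'
        · exact e11 h'
      · exact Or.inr ⟨Or.inr (Or.inr (Or.inr (Or.inr (Or.inl ⟨rfl, rfl⟩)))), e15⟩
  have keyz : ∀ b, H₄.Adj z b ↔ (H₃.Adj z b ∨ b = u) := by
    intro b; rw [hadj']
    constructor
    · rintro (⟨hab, _⟩ | ⟨h, hne⟩)
      · exact Or.inl hab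
      · rcases h with ⟨h', _⟩ | ⟨h', _⟩ | ⟨h', _⟩ | ⟨h', _⟩ | ⟨h', _⟩ | ⟨_, hb⟩
        · exact absurd h' hzv2
        · exact absurd h' hzw1
        · exact absurd h' hzv2
        · exact absurd h' hzw2
        · exact absurd h' hzu
        · exact Or.inr hb
    · rintro (hab | rfl)
      · refine Or.inl ⟨hab, ?_⟩
        rintro (⟨h', _⟩ | ⟨h', _⟩ | ⟨h', _⟩ | ⟨h', _⟩ | ⟨h', _⟩ | ⟨h', _⟩)
        · exact hzv h'
        · exact hzv2 h'
        · exact hzu h'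
        · exact hzv2 h'
        · exact hzw1 h'
        · exact hzw2 h'
      · exact Or.inr ⟨Or.inr (Or.inr (Or.inr (Or.inr (Or.inr ⟨rfl, rfl⟩)))), hzu⟩
  have keyw1 : ∀ b, H₄.Adj w₁ b ↔ ((H₃.Adj w₁ b ∧ b ≠ w₂) ∨ b = v₂) := by
    intro b; rw [hadj']
    constructor
    · rintro (⟨hab, hn⟩ | ⟨h, hne⟩)
      · exact Or.inl ⟨hab, fun hb =>
          hn (Or.inr (Or.inr (Or.inr (Or.inr (Or.inl ⟨rfl, hb⟩)))))⟩
      · rcases h with ⟨h', _⟩ | ⟨_, hb⟩ | ⟨h', _⟩ | ⟨h', _⟩ | ⟨h', _⟩ | ⟨h', _⟩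
        · exact absurd h' hw1v2
        · exact Or.inr hb
        · exact absurd h' hw1v2
        · exact absurd h' hw12
        · exact absurd h' hw1u
        · exact absurd h' e12
    · rintro (⟨hab, hb⟩ | rfl)
      · refine Or.inl ⟨hab, ?_⟩
        rintro (⟨h', _⟩ | ⟨h', _⟩ | ⟨h', _⟩ | ⟨h', _⟩ | ⟨_, h2⟩ | ⟨h', _⟩)
        · exact hw1v h'
        · exact hw1v2 h'
        · exact hw1u h'
        · exact hw1v2 h'
        · exact hb h2
        · exact hw12 h'
      · exact Or.inr ⟨Or.inr (Or.inl ⟨rfl, rfl⟩), hw1v2⟩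
  have keyw2 : ∀ b, H₄.Adj w₂ b ↔ ((H₃.Adj w₂ b ∧ b ≠ w₁) ∨ b = v₂) := by
    intro b; rw [hadj']
    constructor
    · rintro (⟨hab, hn⟩ | ⟨h, hne⟩)
      · exact Or.inl ⟨hab, fun hb =>
          hn (Or.inr (Or.inr (Or.inr (Or.inr (Or.inr ⟨rfl, hb⟩)))))⟩
      · rcases h with ⟨h', _⟩ | ⟨h', _⟩ | ⟨h', _⟩ | ⟨_, hb⟩ | ⟨h', _⟩ | ⟨h', _⟩
        · exact absurd h' hw2v2
        · exact absurd h' e5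
        · exact absurd h' hw2v2
        · exact Or.inr hb
        · exact absurd h' hw2u
        · exact absurd h' e13
    · rintro (⟨hab, hb⟩ | rfl)
      · refine Or.inl ⟨hab, ?_⟩
        rintro (⟨h', _⟩ | ⟨h', _⟩ | ⟨h', _⟩ | ⟨h', _⟩ | ⟨h', _⟩ | ⟨_, h2⟩)
        · exact hw2v h'
        · exact hw2v2 h'
        · exact hw2u h'
        · exact hw2v2 h'
        · exact e5 h'
        · exact hb h2
      · exact Or.inr ⟨Or.inr (Or.inr (Or.inr (Or.inl ⟨rfl, rfl⟩))), hw2v2⟩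
  have keygen : ∀ a, a ≠ v → a ≠ v₂ → a ≠ u → a ≠ z → a ≠ w₁ → a ≠ w₂ →
      ∀ b, H₄.Adj a b ↔ H₃.Adj a b := by
    intro a h1 h2 h3 h4 h5 h6 b; rw [hadj']
    constructor
    · rintro (⟨hab, _⟩ | ⟨h, _⟩)
      · exact hab
      · exfalso
        rcases h with ⟨h', _⟩ | ⟨h', _⟩ | ⟨h', _⟩ | ⟨h', _⟩ | ⟨h', _⟩ | ⟨h', _⟩
        · exact h2 h'
        · exact h5 h'
        · exact h2 h'
        · exact h6 h'
        · exact h3 h'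
        · exact h4 h'
    · intro hab
      refine Or.inl ⟨hab, ?_⟩
      rintro (⟨h', _⟩ | ⟨h', _⟩ | ⟨h', _⟩ | ⟨h', _⟩ | ⟨h', _⟩ | ⟨h', _⟩)
      · exact h1 h'
      · exact h2 h'
      · exact h3 h'
      · exact h2 h'
      · exact h5 h'
      · exact h6 h'
  -- H₃ neighbor finsets
  have hNv2 : H₃.neighborFinset v₂ = {v, u} := by
    ext b; rw [SimpleGraph.mem_neighborFinset, hv2adj]; simp
  have hNz : H₃.neighborFinset z = {y₀} := by
    ext b; rw [SimpleGraph.mem_neighborFinset, hzadj]; simp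
  have hd3v2 : H₃.degree v₂ = 2 := by
    rw [← SimpleGraph.card_neighborFinset_eq_degree, hNv2,
      Finset.card_insert_of_notMem (by simp [e3]), Finset.card_singleton]
  have hd3z : H₃.degree z = 1 := by
    rw [← SimpleGraph.card_neighborFinset_eq_degree, hNz, Finset.card_singleton]
  -- degrees in H₄
  have hd4v : H₄.degree v + 1 = H₃.degree v := by
    have hN : H₄.neighborFinset v = (H₃.neighborFinset v).erase v₂ := by
      ext b
      rw [SimpleGraph.mem_neighborFinset, keyv, Finset.mem_erase,
        SimpleGraph.mem_neighborFinset]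
      tauto
    have hmem : v₂ ∈ H₃.neighborFinset v := (SimpleGraph.mem_neighborFinset _ _ _).mpr adj1
    have h1 : 1 ≤ (H₃.neighborFinset v).card := Finset.card_pos.mpr ⟨v₂, hmem⟩
    rw [← SimpleGraph.card_neighborFinset_eq_degree, ← SimpleGraph.card_neighborFinset_eq_degree,
      hN, Finset.card_erase_of_mem hmem]
    omega
  have hd4v2 : H₄.degree v₂ = 2 := by
    have hN : H₄.neighborFinset v₂ = {w₁, w₂} := by
      ext b; rw [SimpleGraph.mem_neighborFinset, keyv2]; simp
    rw [← SimpleGraph.card_neighborFinset_eq_degree, hN,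
      Finset.card_insert_of_notMem (by simp [hw12]), Finset.card_singleton]
  have hd4z : H₄.degree z = 2 := by
    have hN : H₄.neighborFinset z = insert u (H₃.neighborFinset z) := by
      ext b
      rw [SimpleGraph.mem_neighborFinset, keyz, Finset.mem_insert,
        SimpleGraph.mem_neighborFinset]
      tauto
    have hu : u ∉ H₃.neighborFinset z := by
      rw [SimpleGraph.mem_neighborFinset, hzadj]
      exact fun h => hy0u h.symm
    rw [← SimpleGraph.card_neighborFinset_eq_degree, hN, Finset.card_insert_of_notMem hu,
      hNz, Finset.card_singleton]
  have hd4u : H₄.degree u = H₃.degree u := by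
    have hN : H₄.neighborFinset u = insert z ((H₃.neighborFinset u).erase v₂) := by
      ext b
      rw [SimpleGraph.mem_neighborFinset, keyu, Finset.mem_insert, Finset.mem_erase,
        SimpleGraph.mem_neighborFinset]
      tauto
    have hz' : z ∉ (H₃.neighborFinset u).erase v₂ := by
      intro h
      have h' := (SimpleGraph.mem_neighborFinset _ _ _).mp (Finset.mem_of_mem_erase h)
      exact hy0u ((hzadj u).mp h'.symm).symm
    have hv2mem : v₂ ∈ H₃.neighborFinset u := (SimpleGraph.mem_neighborFinset _ _ _).mpr adj2.symm
    have h1 : 1 ≤ (H₃.neighborFinset u).card := Finset.card_pos.mpr ⟨v₂, hv2mem⟩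
    rw [← SimpleGraph.card_neighborFinset_eq_degree, ← SimpleGraph.card_neighborFinset_eq_degree,
      hN, Finset.card_insert_of_notMem hz', Finset.card_erase_of_mem hv2mem]
    omega
  have hd4w1 : H₄.degree w₁ = H₃.degree w₁ := by
    have hN : H₄.neighborFinset w₁ = insert v₂ ((H₃.neighborFinset w₁).erase w₂) := by
      ext b
      rw [SimpleGraph.mem_neighborFinset, keyw1, Finset.mem_insert, Finset.mem_erase,
        SimpleGraph.mem_neighborFinset]
      tauto
    have hv2' : v₂ ∉ (H₃.neighborFinset w₁).erase w₂ := by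
      intro h
      have h' := (SimpleGraph.mem_neighborFinset _ _ _).mp (Finset.mem_of_mem_erase h)
      rcases (hv2adj w₁).mp h'.symm with h'' | h''
      · exact hw1v h''
      · exact hw1u h''
    have hwmem : w₂ ∈ H₃.neighborFinset w₁ := (SimpleGraph.mem_neighborFinset _ _ _).mpr hwadj
    have h1 : 1 ≤ (H₃.neighborFinset w₁).card := Finset.card_pos.mpr ⟨w₂, hwmem⟩
    rw [← SimpleGraph.card_neighborFinset_eq_degree, ← SimpleGraph.card_neighborFinset_eq_degree,
      hN, Finset.card_insert_of_notMem hv2', Finset.card_erase_of_mem hwmem]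
    omega
  have hd4w2 : H₄.degree w₂ = H₃.degree w₂ := by
    have hN : H₄.neighborFinset w₂ = insert v₂ ((H₃.neighborFinset w₂).erase w₁) := by
      ext b
      rw [SimpleGraph.mem_neighborFinset, keyw2, Finset.mem_insert, Finset.mem_erase,
        SimpleGraph.mem_neighborFinset]
      tauto
    have hv2' : v₂ ∉ (H₃.neighborFinset w₂).erase w₁ := by
      intro h
      have h' := (SimpleGraph.mem_neighborFinset _ _ _).mp (Finset.mem_of_mem_erase h)
      rcases (hv2adj w₂).mp h'.symm with h'' | h''
      · exact hw2v h''
      · exact hw2u h''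
    have hwmem : w₁ ∈ H₃.neighborFinset w₂ := (SimpleGraph.mem_neighborFinset _ _ _).mpr hwadj.symm
    have h1 : 1 ≤ (H₃.neighborFinset w₂).card := Finset.card_pos.mpr ⟨w₁, hwmem⟩
    rw [← SimpleGraph.card_neighborFinset_eq_degree, ← SimpleGraph.card_neighborFinset_eq_degree,
      hN, Finset.card_insert_of_notMem hv2', Finset.card_erase_of_mem hwmem]
    omega
  have hd4gen : ∀ y, y ≠ v → y ≠ v₂ → y ≠ u → y ≠ z → y ≠ w₁ → y ≠ w₂ →
      H₄.degree y = H₃.degree y := by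
    intro y h1 h2 h3 h4 h5 h6
    have hN : H₄.neighborFinset y = H₃.neighborFinset y := by
      ext b
      rw [SimpleGraph.mem_neighborFinset, keygen y h1 h2 h3 h4 h5 h6,
        SimpleGraph.mem_neighborFinset]
    rw [← SimpleGraph.card_neighborFinset_eq_degree, ← SimpleGraph.card_neighborFinset_eq_degree,
      hN]
  have hsame : ∀ y, y ≠ v → y ≠ z → H₄.degree y = H₃.degree y := by
    intro y h1 h4
    by_cases h2 : y = v₂
    · subst h2; rw [hd4v2, hd3v2]
    by_cases h3 : y = u
    · subst h3; exact hd4u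
    by_cases h5 : y = w₁
    · subst h5; exact hd4w1
    by_cases h6 : y = w₂
    · subst h6; exact hd4w2
    exact hd4gen y h1 h2 h3 h4 h5 h6
  -- final sum comparison
  have hzmem : z ∈ Finset.univ.erase v := Finset.mem_erase.mpr ⟨hzv, Finset.mem_univ z⟩
  have split : ∀ G : SimpleGraph V, zagrebM1 G =
      (∑ y ∈ (Finset.univ.erase v).erase z, G.degree y ^ 2) + G.degree z ^ 2
        + G.degree v ^ 2 := by
    intro G
    rw [zagrebM1, ← Finset.sum_erase_add _ _ (Finset.mem_univ v),
      ← Finset.sum_erase_add _ _ hzmem]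
  rw [split H₄, split H₃]
  have hcong : ∑ y ∈ (Finset.univ.erase v).erase z, H₄.degree y ^ 2
      = ∑ y ∈ (Finset.univ.erase v).erase z, H₃.degree y ^ 2 := by
    apply Finset.sum_congr rfl
    intro y hy
    rw [Finset.mem_erase, Finset.mem_erase] at hy
    rw [hsame y hy.2.1 hy.1]
  rw [hcong, hd4z, hd3z, ← hd4v]
  have h4 : 2 ≤ H₄.degree v := by omega
  nlinarith [h4]

theorem M1_operationII_lt {V : Type*} [Fintype V] (H₃ : SimpleGraph V)
    (hconn : H₃.Connected) (v x z w₁ w₂ : V)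
    (hdeg : 3 ≤ H₃.degree v)
    (p : H₃.Walk v x) (q : H₃.Walk v z)
    (hp : p.IsPath) (hq : q.IsPath)
    (hplen : 2 ≤ p.length) (hqlen : 2 ≤ q.length)
    (hpx : H₃.degree x = 1) (hqz : H₃.degree z = 1)
    (hpint : ∀ y ∈ p.support, y ≠ v → y ≠ x → H₃.degree y = 2)
    (hqint : ∀ y ∈ q.support, y ≠ v → y ≠ z → H₃.degree y = 2)
    (hmeet : ∀ y, y ∈ p.support → y ∈ q.support → y = v)
    (hcyc : ∃ (c₀ : V) (c : H₃.Walk c₀ c₀), c.IsCycle ∧ s(w₁, w₂) ∈ c.edges)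
    (hw₁p : w₁ ∉ p.support) (hw₂p : w₂ ∉ p.support)
    (hw₁q : w₁ ∉ q.support) (hw₂q : w₂ ∉ q.support)
    (H₄ : SimpleGraph V)
    (hH₄ : H₄ = SimpleGraph.fromEdgeSet
      ((H₃.edgeSet \ {s(v, p.getVert 1), s(p.getVert 2, p.getVert 1), s(w₁, w₂)})
        ∪ {s(p.getVert 1, w₁), s(p.getVert 1, w₂), s(p.getVert 2, z)})) :
    zagrebM1 H₄ < zagrebM1 H₃ := by
  classical
  set v₂ := p.getVert 1 with hv₂def
  set u := p.getVert 2 with hudef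
  have m1 : v₂ ∈ p.support := aux_getVert_mem_support p 1
  have m2 : u ∈ p.support := aux_getVert_mem_support p 2
  have mv : v ∈ p.support := p.start_mem_support
  have mzq : z ∈ q.support := q.end_mem_support
  have hv2v : v₂ ≠ v := by
    intro h
    have := aux_getVert_inj hp (by omega) (by omega) (h.trans p.getVert_zero.symm)
    omega
  have hv2u : v₂ ≠ u := by
    intro h
    have := aux_getVert_inj hp (by omega) (by omega) h
    omega
  have huv : u ≠ v := by
    intro h
    have := aux_getVert_inj hp (by omega) (by omega) (h.trans p.getVert_zero.symm)
    omega
  have hv2x : v₂ ≠ x := by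
    intro h
    have := aux_getVert_inj hp (by omega) (le_refl _) (h.trans p.getVert_length.symm)
    omega
  have hzv : z ≠ v := by
    intro h
    subst h
    have := SimpleGraph.Walk.isPath_iff_eq_nil.mp hq
    rw [this] at hqlen
    simp at hqlen
  obtain ⟨c₀, c, hc, hce⟩ := hcyc
  have hwadj : H₃.Adj w₁ w₂ := (SimpleGraph.mem_edgeSet H₃).mp (c.edges_subset_edgeSet hce)
  have hw12 : w₁ ≠ w₂ := hwadj.ne
  have hw1v : w₁ ≠ v := fun h => hw₁p (h ▸ mv)
  have hw1v2 : w₁ ≠ v₂ := fun h => hw₁p (h ▸ m1)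
  have hw1u : w₁ ≠ u := fun h => hw₁p (h ▸ m2)
  have hw2v : w₂ ≠ v := fun h => hw₂p (h ▸ mv)
  have hw2v2 : w₂ ≠ v₂ := fun h => hw₂p (h ▸ m1)
  have hw2u : w₂ ≠ u := fun h => hw₂p (h ▸ m2)
  have hzw1 : z ≠ w₁ := fun h => hw₁q (h ▸ mzq)
  have hzw2 : z ≠ w₂ := fun h => hw₂q (h ▸ mzq)
  have hzv2 : z ≠ v₂ := fun h => hv2v (hmeet v₂ m1 (h ▸ mzq))
  have hzu : z ≠ u := fun h => huv (hmeet u m2 (h ▸ mzq))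
  have adj1 : H₃.Adj v v₂ := by
    have := p.adj_getVert_succ (i := 0) (by omega)
    simpa [p.getVert_zero] using this
  have adj2 : H₃.Adj v₂ u := p.adj_getVert_succ (i := 1) (by omega)
  have hdv2 : H₃.degree v₂ = 2 := hpint v₂ m1 hv2v hv2x
  have hNv2 : H₃.neighborFinset v₂ = {v, u} := by
    symm
    apply Finset.eq_of_subset_of_card_le
    · intro b hb
      simp only [Finset.mem_insert, Finset.mem_singleton] at hb
      rcases hb with rfl | rfl
      · exact (SimpleGraph.mem_neighborFinset _ _ _).mpr adj1.symm
      · exact (SimpleGraph.mem_neighborFinset _ _ _).mpr adj2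
    · rw [SimpleGraph.card_neighborFinset_eq_degree, hdv2,
        Finset.card_insert_of_notMem (by simp [Ne.symm huv]), Finset.card_singleton]
  have hv2adj : ∀ b, H₃.Adj v₂ b ↔ b = v ∨ b = u := by
    intro b
    rw [← SimpleGraph.mem_neighborFinset, hNv2]
    simp
  set y₀ := q.getVert (q.length - 1) with hy₀def
  have my₀ : y₀ ∈ q.support := aux_getVert_mem_support q _
  have adjz : H₃.Adj y₀ z := by
    have h' : q.length - 1 + 1 = q.length := by omega
    have := q.adj_getVert_succ (i := q.length - 1) (by omega)
    rw [h'] at this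
    simpa [q.getVert_length] using this
  have hNz : H₃.neighborFinset z = {y₀} := by
    symm
    apply Finset.eq_of_subset_of_card_le
    · intro b hb
      simp only [Finset.mem_singleton] at hb
      subst hb
      exact (SimpleGraph.mem_neighborFinset _ _ _).mpr adjz.symm
    · rw [SimpleGraph.card_neighborFinset_eq_degree, hqz, Finset.card_singleton]
  have hzadj : ∀ b, H₃.Adj z b ↔ b = y₀ := by
    intro b
    rw [← SimpleGraph.mem_neighborFinset, hNz]
    simp
  have hy0u : y₀ ≠ u := fun h => huv (hmeet u m2 (h ▸ my₀))
  have hadj : ∀ a b : V, H₄.Adj a b ↔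
      ((H₃.Adj a b ∧ ¬(s(a,b) = s(v, v₂) ∨ s(a,b) = s(u, v₂) ∨ s(a,b) = s(w₁, w₂)))
        ∨ ((s(a,b) = s(v₂, w₁) ∨ s(a,b) = s(v₂, w₂) ∨ s(a,b) = s(u, z)) ∧ a ≠ b)) := by
    intro a b
    rw [hH₄, SimpleGraph.fromEdgeSet_adj]
    simp only [Set.mem_union, Set.mem_diff, Set.mem_insert_iff, Set.mem_singleton_iff,
      SimpleGraph.mem_edgeSet, ← hv₂def, ← hudef]
    have hne' : H₃.Adj a b → a ≠ b := SimpleGraph.Adj.ne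
    tauto
  exact zagreb_helper H₃ H₄ v v₂ u z w₁ w₂ y₀ hadj hv2v hv2u huv hzv hw12
    hw1v hw1v2 hw1u hw2v hw2v2 hw2u hzw1 hzw2 hzv2 hzu hy0u hv2adj hzadj hwadj hdeg
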